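/- For every n ≥ 1, the bivariate peak polynomials satisfy the convolution formula W_{n+1}(x,y) = Σ_{k=0}^{n} C(n,k)·L_k(x,y)·L_{n−k}(x,y), where C(n,k) is the binomial coefficient. -/

import Mathlib

open MvPolynomial

set_option maxHeartbeats 1000000

/-- The `i`-th entry (1-indexed) of the permutation `σ` of `[n]`, with the
convention that positions `0` and `> n` carry the entry `0`. -/
def permEntry (n : ℕ) (σ : Equiv.Perm (Fin n)) (i : ℕ) : ℕ :=
  if h : 1 ≤ i ∧ i ≤ n then ((σ ⟨i - 1, by omega⟩ : Fin n) : ℕ) + 1 else 0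

/-- The number of left peaks of `σ`: indices `1 ≤ i ≤ n-1` with
`σ_{i-1} < σ_i > σ_{i+1}`, convention `σ₀ = 0`. -/
def leftPeakCount (n : ℕ) (σ : Equiv.Perm (Fin n)) : ℕ :=
  ((Finset.Icc 1 (n - 1)).filter fun i =>
    permEntry n σ (i - 1) < permEntry n σ i ∧ permEntry n σ (i + 1) < permEntry n σ i).card

/-- The number of exterior peaks of `σ`: indices `1 ≤ i ≤ n` with
`σ_{i-1} < σ_i > σ_{i+1}`, conventions `σ₀ = σ_{n+1} = 0`. -/
def extPeakCount (n : ℕ) (σ : Equiv.Perm (Fin n)) : ℕ :=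
  ((Finset.Icc 1 n).filter fun i =>
    permEntry n σ (i - 1) < permEntry n σ i ∧ permEntry n σ (i + 1) < permEntry n σ i).card

/-- The number of interior peaks of `σ`: indices `2 ≤ i ≤ n-1` with
`σ_{i-1} < σ_i > σ_{i+1}`. -/
def intPeakCount (n : ℕ) (σ : Equiv.Perm (Fin n)) : ℕ :=
  ((Finset.Icc 2 (n - 1)).filter fun i =>
    permEntry n σ (i - 1) < permEntry n σ i ∧ permEntry n σ (i + 1) < permEntry n σ i).card

/-- The number of up-down runs of `σ`: maximal monotone segments of the
extended sequence `0, σ₁, …, σₙ`, i.e. one more than the number of direction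
changes of that sequence (and `0` for `n = 0`). -/
def udRunCount (n : ℕ) (σ : Equiv.Perm (Fin n)) : ℕ :=
  if n = 0 then 0 else
    1 + ((Finset.Icc 1 (n - 1)).filter fun i =>
      (permEntry n σ (i - 1) < permEntry n σ i ∧ permEntry n σ (i + 1) < permEntry n σ i) ∨
      (permEntry n σ i < permEntry n σ (i - 1) ∧ permEntry n σ i < permEntry n σ (i + 1))).card

/-- The number of alternating runs of `σ`: maximal monotone segments of
`σ₁, …, σₙ`, i.e. one more than the number of direction changes (and `0` for `n = 0`). -/
def altRunCount (n : ℕ) (σ : Equiv.Perm (Fin n)) : ℕ :=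
  if n = 0 then 0 else
    1 + ((Finset.Icc 2 (n - 1)).filter fun i =>
      (permEntry n σ (i - 1) < permEntry n σ i ∧ permEntry n σ (i + 1) < permEntry n σ i) ∨
      (permEntry n σ i < permEntry n σ (i - 1) ∧ permEntry n σ i < permEntry n σ (i + 1))).card

/-- `L n k` : the number of permutations of `[n]` with exactly `k` left peaks. -/
def leftPeakNum (n k : ℕ) : ℕ :=
  (Finset.univ.filter fun σ : Equiv.Perm (Fin n) => leftPeakCount n σ = k).card

/-- `W n k` : the number of permutations of `[n]` with exactly `k` exterior peaks. -/
def extPeakNum (n k : ℕ) : ℕ :=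
  (Finset.univ.filter fun σ : Equiv.Perm (Fin n) => extPeakCount n σ = k).card

/-- `M n k` : the number of permutations of `[n]` with exactly `k` interior peaks. -/
def intPeakNum (n k : ℕ) : ℕ :=
  (Finset.univ.filter fun σ : Equiv.Perm (Fin n) => intPeakCount n σ = k).card

/-- `Λ n k` : the number of permutations of `[n]` with exactly `k` up-down runs. -/
def udRunNum (n k : ℕ) : ℕ :=
  (Finset.univ.filter fun σ : Equiv.Perm (Fin n) => udRunCount n σ = k).card

/-- `R n k` : the number of permutations of `[n]` with exactly `k` alternating runs. -/
def altRunNum (n k : ℕ) : ℕ :=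
  (Finset.univ.filter fun σ : Equiv.Perm (Fin n) => altRunCount n σ = k).card

/-- The bivariate exterior peak polynomial
`W_n(x,y) = Σ_{k=1}^{⌊(n+1)/2⌋} W(n,k)·x^{2k}·y^{n−2k+1}`, with `W_0(x,y) = y`. -/
noncomputable def Wb (n : ℕ) : MvPolynomial (Fin 2) ℚ :=
  if n = 0 then X 1 else
    ∑ k ∈ Finset.Icc 1 ((n + 1) / 2),
      (extPeakNum n k : MvPolynomial (Fin 2) ℚ) * X 0 ^ (2 * k) * X 1 ^ (n + 1 - 2 * k)

/-- The bivariate left peak polynomial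
`L_n(x,y) = Σ_{k=0}^{⌊n/2⌋} L(n,k)·x^{2k+1}·y^{n−2k}`. -/
noncomputable def Lb (n : ℕ) : MvPolynomial (Fin 2) ℚ :=
  ∑ k ∈ Finset.range (n / 2 + 1),
    (leftPeakNum n k : MvPolynomial (Fin 2) ℚ) * X 0 ^ (2 * k + 1) * X 1 ^ (n - 2 * k)

section Build

variable {n k : ℕ}

def bpFun (n k : ℕ) (S : Finset (Fin n)) (hS : S.card = k) (α : Equiv.Perm (Fin k))
    (β : Equiv.Perm (Fin (n - k))) : Fin (n + 1) → Fin (n + 1) := fun j =>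
  if h : (j : ℕ) < k then (S.orderEmbOfFin hS (α ⟨j, h⟩)).castSucc
  else if h2 : (j : ℕ) = k then Fin.last n
  else (Sᶜ.orderEmbOfFin (by rw [Finset.card_compl, hS, Fintype.card_fin])
    (β ⟨n - j, by have := j.isLt; omega⟩)).castSucc

lemma compl_card (S : Finset (Fin n)) (hS : S.card = k) : Sᶜ.card = n - k := by
  rw [Finset.card_compl, hS, Fintype.card_fin]

lemma bpFun_injective (S : Finset (Fin n)) (hS : S.card = k) (α : Equiv.Perm (Fin k))
    (β : Equiv.Perm (Fin (n - k))) : Function.Injective (bpFun n k S hS α β) := by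
  have hT := compl_card S hS
  have hTS : ∀ (a : Fin k) (b : Fin (n-k)),
      (S.orderEmbOfFin hS a : Fin n) ≠ Sᶜ.orderEmbOfFin hT b := by
    intro a b hab
    have h1 : (S.orderEmbOfFin hS a : Fin n) ∈ S := Finset.orderEmbOfFin_mem _ _ _
    have h2 : (Sᶜ.orderEmbOfFin hT b : Fin n) ∈ Sᶜ := Finset.orderEmbOfFin_mem _ _ _
    rw [hab] at h1
    exact (Finset.mem_compl.mp h2) h1
  intro j1 j2 heq
  unfold bpFun at heq
  split_ifs at heq with h1 h2 h3 h4 h5 h6 h7 h8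
  · -- both prefix
    have h := α.injective ((S.orderEmbOfFin hS).injective (Fin.castSucc_injective _ heq))
    exact Fin.ext (by simpa using congrArg Fin.val h)
  · exact absurd heq (Fin.castSucc_lt_last _).ne
  · exact absurd (Fin.castSucc_injective _ heq) (hTS _ _)
  · exact absurd heq.symm (Fin.castSucc_lt_last _).ne
  · exact Fin.ext (by omega)
  · exact absurd heq.symm (Fin.castSucc_lt_last _).ne
  · exact absurd (Fin.castSucc_injective _ heq).symm (hTS _ _)
  · exact absurd heq (Fin.castSucc_lt_last _).ne
  · -- both suffix
    have h := β.injective ((Sᶜ.orderEmbOfFin hT).injective (Fin.castSucc_injective _ heq))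
    have h2 : n - (j1 : ℕ) = n - (j2 : ℕ) := by simpa using congrArg Fin.val h
    have e1 := j1.isLt; have e2 := j2.isLt
    exact Fin.ext (by omega)

noncomputable def bp (n k : ℕ) (S : Finset (Fin n)) (α : Equiv.Perm (Fin k))
    (β : Equiv.Perm (Fin (n - k))) : Equiv.Perm (Fin (n + 1)) :=
  if hS : S.card = k then
    Equiv.ofBijective _ ((Finite.injective_iff_bijective).mp (bpFun_injective S hS α β))
  else 1

lemma bp_apply (S : Finset (Fin n)) (hS : S.card = k) (α : Equiv.Perm (Fin k))
    (β : Equiv.Perm (Fin (n - k))) (j : Fin (n+1)) :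
    bp n k S α β j = bpFun n k S hS α β j := by
  rw [bp, dif_pos hS]; rfl

end Build

section Entries

variable {n k : ℕ} (S : Finset (Fin n)) (hS : S.card = k) (hk : k ≤ n)
  (α : Equiv.Perm (Fin k)) (β : Equiv.Perm (Fin (n - k)))

include hS hk

lemma bp_entry_prefix {i : ℕ} (hi1 : 1 ≤ i) (hi2 : i ≤ k) :
    permEntry (n+1) (bp n k S α β) i
      = (S.orderEmbOfFin hS (α ⟨i - 1, by omega⟩) : Fin n) + 1 := by
  have hin : 1 ≤ i ∧ i ≤ n + 1 := ⟨hi1, by omega⟩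
  rw [permEntry, dif_pos hin, bp_apply S hS, bpFun]
  rw [dif_pos (show i - 1 < k by omega)]
  simp

lemma bp_entry_max : permEntry (n+1) (bp n k S α β) (k+1) = n + 1 := by
  have hin : 1 ≤ k + 1 ∧ k + 1 ≤ n + 1 := ⟨by omega, by omega⟩
  rw [permEntry, dif_pos hin, bp_apply S hS, bpFun]
  rw [dif_neg (show ¬ (k + 1 - 1 < k) by omega), dif_pos (show k + 1 - 1 = k by omega)]
  simp

lemma bp_entry_suffix {i : ℕ} (hi1 : k + 2 ≤ i) (hi2 : i ≤ n + 1) :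
    permEntry (n+1) (bp n k S α β) i
      = (Sᶜ.orderEmbOfFin (compl_card S hS) (β ⟨n + 1 - i, by omega⟩) : Fin n) + 1 := by
  rw [permEntry, dif_pos ⟨by omega, hi2⟩, bp_apply S hS, bpFun]
  rw [dif_neg (show ¬ (i - 1 < k) by omega), dif_neg (show ¬ (i - 1 = k) by omega)]
  have hv : n - (i - 1) = n + 1 - i := by omega
  simp [hv]

end Entries

section Cmp

variable {n k : ℕ} (S : Finset (Fin n)) (hS : S.card = k) (hk : k ≤ n)
  (α : Equiv.Perm (Fin k)) (β : Equiv.Perm (Fin (n - k)))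

include hS hk

lemma bp_entry_le {i : ℕ} (hi : i ≠ k + 1) : permEntry (n+1) (bp n k S α β) i ≤ n := by
  rcases Nat.lt_or_ge i 1 with h | h
  · rw [permEntry, dif_neg (by omega)]; omega
  rcases Nat.lt_or_ge (n+1) i with h2 | h2
  · rw [permEntry, dif_neg (by omega)]; omega
  rcases Nat.lt_or_ge i (k+1) with h3 | h3
  · rw [bp_entry_prefix S hS hk α β h (by omega)]
    have := (S.orderEmbOfFin hS (α ⟨i - 1, by omega⟩) : Fin n).isLt
    omega
  · rw [bp_entry_suffix S hS hk α β (by omega) h2]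
    have := (Sᶜ.orderEmbOfFin (compl_card S hS) (β ⟨n + 1 - i, by omega⟩) : Fin n).isLt
    omega

lemma bp_cmp_prefix {i j : ℕ} (hi : i ≤ k) (hj : j ≤ k) :
    (permEntry (n+1) (bp n k S α β) i < permEntry (n+1) (bp n k S α β) j
      ↔ permEntry k α i < permEntry k α j) := by
  rcases Nat.lt_or_ge i 1 with h0i | h1i
  · have hi0 : i = 0 := by omega
    subst hi0
    rw [show permEntry (n+1) (bp n k S α β) 0 = 0 from by rw [permEntry, dif_neg (by omega)],
      show permEntry k α 0 = 0 from by rw [permEntry, dif_neg (by omega)]]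
    rcases Nat.lt_or_ge j 1 with h0j | h1j
    · have : j = 0 := by omega
      subst this
      rw [show permEntry (n+1) (bp n k S α β) 0 = 0 from by rw [permEntry, dif_neg (by omega)],
        show permEntry k α 0 = 0 from by rw [permEntry, dif_neg (by omega)]]
    · rw [bp_entry_prefix S hS hk α β h1j hj, permEntry, dif_pos ⟨h1j, hj⟩]
      simp
  · rcases Nat.lt_or_ge j 1 with h0j | h1j
    · have : j = 0 := by omega
      subst this
      rw [show permEntry (n+1) (bp n k S α β) 0 = 0 from by rw [permEntry, dif_neg (by omega)],
        show permEntry k α 0 = 0 from by rw [permEntry, dif_neg (by omega)]]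
      simp
    · rw [bp_entry_prefix S hS hk α β h1i hi, bp_entry_prefix S hS hk α β h1j hj,
        permEntry, dif_pos ⟨h1i, hi⟩, permEntry, dif_pos ⟨h1j, hj⟩]
      have : ∀ a b : Fin k, ((S.orderEmbOfFin hS a : Fin n) : ℕ) < (S.orderEmbOfFin hS b : Fin n)
          ↔ (a : ℕ) < b := by
        intro a b
        rw [← Fin.lt_def, OrderEmbedding.lt_iff_lt, Fin.lt_def]
      have h := this (α ⟨i - 1, by omega⟩) (α ⟨j - 1, by omega⟩)
      omega

lemma bp_cmp_suffix {i j : ℕ} (hi1 : k + 2 ≤ i) (hi2 : i ≤ n + 2) (hj1 : k + 2 ≤ j)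
    (hj2 : j ≤ n + 2) :
    (permEntry (n+1) (bp n k S α β) i < permEntry (n+1) (bp n k S α β) j
      ↔ permEntry (n - k) β (n + 2 - i) < permEntry (n - k) β (n + 2 - j)) := by
  have hz : ∀ l : ℕ, l = n + 2 → permEntry (n+1) (bp n k S α β) l = 0 := by
    intro l hl; rw [permEntry, dif_neg (by omega)]
  have hzb : ∀ l : ℕ, l = n + 2 → permEntry (n - k) β (n + 2 - l) = 0 := by
    intro l hl; rw [permEntry, dif_neg (by omega)]
  have hE : ∀ (l : ℕ) (h1 : k + 2 ≤ l) (h2 : l ≤ n + 1), permEntry (n - k) β (n + 2 - l)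
      = (β ⟨n + 1 - l, by omega⟩ : Fin (n - k)) + 1 := by
    intro l h1 h2
    rw [permEntry, dif_pos ⟨by omega, by omega⟩]
    have hab : (⟨n + 2 - l - 1, by omega⟩ : Fin (n - k)) = (⟨n + 1 - l, by omega⟩ : Fin (n - k)) :=
      Fin.ext (show n + 2 - l - 1 = n + 1 - l by omega)
    rw [hab]
  have hmono : ∀ a b : Fin (n - k),
      ((Sᶜ.orderEmbOfFin (compl_card S hS) a : Fin n) : ℕ) < (Sᶜ.orderEmbOfFin (compl_card S hS) b : Fin n)
      ↔ (a : ℕ) < b := by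
    intro a b
    rw [← Fin.lt_def, OrderEmbedding.lt_iff_lt, Fin.lt_def]
  rcases Nat.lt_or_ge (n+1) i with h2i | h2i
  · rw [hz i (by omega), hzb i (by omega)]
    rcases Nat.lt_or_ge (n+1) j with h2j | h2j
    · rw [hz j (by omega), hzb j (by omega)]
    · rw [bp_entry_suffix S hS hk α β hj1 h2j, hE j hj1 h2j]
      omega
  · rcases Nat.lt_or_ge (n+1) j with h2j | h2j
    · rw [hz j (by omega), hzb j (by omega),
        bp_entry_suffix S hS hk α β hi1 h2i, hE i hi1 h2i]
      omega
    · rw [bp_entry_suffix S hS hk α β hi1 h2i, bp_entry_suffix S hS hk α β hj1 h2j,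
        hE i hi1 h2i, hE j hj1 h2j]
      have h := hmono (β ⟨n + 1 - i, by omega⟩) (β ⟨n + 1 - j, by omega⟩)
      omega

end Cmp

section PeakLemma

variable {n k : ℕ} (S : Finset (Fin n)) (hS : S.card = k) (hk : k ≤ n)
  (α : Equiv.Perm (Fin k)) (β : Equiv.Perm (Fin (n - k)))

include hS hk

lemma bp_lpA :
    ((Finset.Icc 1 (k-1)).filter (fun i =>
      permEntry (n+1) (bp n k S α β) (i-1) < permEntry (n+1) (bp n k S α β) i ∧
      permEntry (n+1) (bp n k S α β) (i+1) < permEntry (n+1) (bp n k S α β) i)).card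
    = leftPeakCount k α := by
  rw [leftPeakCount]
  congr 1
  apply Finset.filter_congr
  intro i hi
  simp only [Finset.mem_Icc] at hi
  exact and_congr (bp_cmp_prefix S hS hk α β (by omega) (by omega))
    (bp_cmp_prefix S hS hk α β (by omega) (by omega))

lemma bp_lpB :
    ((Finset.Icc (k+3) (n+1)).filter (fun i =>
      permEntry (n+1) (bp n k S α β) (i-1) < permEntry (n+1) (bp n k S α β) i ∧
      permEntry (n+1) (bp n k S α β) (i+1) < permEntry (n+1) (bp n k S α β) i)).card
    = leftPeakCount (n - k) β := by
  rw [leftPeakCount]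
  apply Finset.card_nbij' (i := fun a => n + 2 - a) (j := fun s => n + 2 - s)
  · intro a ha
    simp only [Finset.mem_coe, Finset.mem_filter, Finset.mem_Icc] at ha ⊢
    obtain ⟨⟨ha1, ha2⟩, hp1, hp2⟩ := ha
    refine ⟨⟨by omega, by omega⟩, ?_, ?_⟩
    · have h2 := (bp_cmp_suffix S hS hk α β (i := a+1) (j := a)
        (by omega) (by omega) (by omega) (by omega)).mp hp2
      have e2 : n + 2 - (a + 1) = n + 2 - a - 1 := by omega
      rwa [e2] at h2
    · have h1 := (bp_cmp_suffix S hS hk α β (i := a-1) (j := a)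
        (by omega) (by omega) (by omega) (by omega)).mp hp1
      have e1 : n + 2 - (a - 1) = n + 2 - a + 1 := by omega
      rwa [e1] at h1
  · intro s hs
    simp only [Finset.mem_coe, Finset.mem_filter, Finset.mem_Icc] at hs ⊢
    obtain ⟨⟨hs1, hs2⟩, hq1, hq2⟩ := hs
    refine ⟨⟨by omega, by omega⟩, ?_, ?_⟩
    · apply (bp_cmp_suffix S hS hk α β (i := n + 2 - s - 1) (j := n + 2 - s)
        (by omega) (by omega) (by omega) (by omega)).mpr
      have e1 : n + 2 - (n + 2 - s - 1) = s + 1 := by omega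
      have e2 : n + 2 - (n + 2 - s) = s := by omega
      rw [e1, e2]
      exact hq2
    · apply (bp_cmp_suffix S hS hk α β (i := n + 2 - s + 1) (j := n + 2 - s)
        (by omega) (by omega) (by omega) (by omega)).mpr
      have e1 : n + 2 - (n + 2 - s + 1) = s - 1 := by omega
      have e2 : n + 2 - (n + 2 - s) = s := by omega
      rw [e1, e2]
      exact hq1
  · intro a ha
    simp only [Finset.mem_coe, Finset.mem_filter, Finset.mem_Icc] at ha ⊢
    omega
  · intro s hs
    simp only [Finset.mem_coe, Finset.mem_filter, Finset.mem_Icc] at hs ⊢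
    omega

lemma bp_extPeak :
    extPeakCount (n+1) (bp n k S α β)
      = 1 + leftPeakCount k α + leftPeakCount (n - k) β := by
  have hEle : ∀ i : ℕ, i ≠ k + 1 → permEntry (n+1) (bp n k S α β) i ≤ n :=
    fun i hi => bp_entry_le S hS hk α β hi
  have hEmax := bp_entry_max S hS hk α β
  rw [extPeakCount]
  have key : (Finset.Icc 1 (n+1)).filter (fun i =>
      permEntry (n+1) (bp n k S α β) (i-1) < permEntry (n+1) (bp n k S α β) i ∧
      permEntry (n+1) (bp n k S α β) (i+1) < permEntry (n+1) (bp n k S α β) i)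
    = (((Finset.Icc 1 (k-1)).filter (fun i =>
        permEntry (n+1) (bp n k S α β) (i-1) < permEntry (n+1) (bp n k S α β) i ∧
        permEntry (n+1) (bp n k S α β) (i+1) < permEntry (n+1) (bp n k S α β) i) ∪ {k+1})
      ∪ (Finset.Icc (k+3) (n+1)).filter (fun i =>
        permEntry (n+1) (bp n k S α β) (i-1) < permEntry (n+1) (bp n k S α β) i ∧
        permEntry (n+1) (bp n k S α β) (i+1) < permEntry (n+1) (bp n k S α β) i)) := by
    ext i
    simp only [Finset.mem_filter, Finset.mem_union, Finset.mem_singleton, Finset.mem_Icc]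
    constructor
    · rintro ⟨⟨h1, h2⟩, hp1, hp2⟩
      by_cases hik : i = k + 1
      · exact Or.inl (Or.inr hik)
      have hik0 : i ≠ k := by
        intro h
        have hx := hEle i (by omega)
        have h21 : permEntry (n+1) (bp n k S α β) (i+1) = n + 1 := by
          rw [show i + 1 = k + 1 by omega]; exact hEmax
        omega
      have hik2 : i ≠ k + 2 := by
        intro h
        have hx := hEle i (by omega)
        have h21 : permEntry (n+1) (bp n k S α β) (i-1) = n + 1 := by
          rw [show i - 1 = k + 1 by omega]; exact hEmax
        omega
      rcases Nat.lt_or_ge i k with hc | hc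
      · exact Or.inl (Or.inl ⟨⟨by omega, by omega⟩, hp1, hp2⟩)
      · exact Or.inr ⟨⟨by omega, by omega⟩, hp1, hp2⟩
    · rintro ((⟨⟨h1, h2⟩, hp⟩ | h) | ⟨⟨h1, h2⟩, hp⟩)
      · exact ⟨⟨by omega, by omega⟩, hp⟩
      · have e1 : permEntry (n+1) (bp n k S α β) (i - 1) ≤ n := by
          have := hEle (i - 1) (by omega)
          omega
        have e2 : permEntry (n+1) (bp n k S α β) (i + 1) ≤ n := by
          have := hEle (i + 1) (by omega)
          omega
        have e3 : permEntry (n+1) (bp n k S α β) i = n + 1 := by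
          rw [h]; exact hEmax
        exact ⟨⟨by omega, by omega⟩, by omega, by omega⟩
      · exact ⟨⟨by omega, by omega⟩, hp⟩
  rw [key]
  have hd1 : Disjoint ((Finset.Icc 1 (k-1)).filter (fun i =>
      permEntry (n+1) (bp n k S α β) (i-1) < permEntry (n+1) (bp n k S α β) i ∧
      permEntry (n+1) (bp n k S α β) (i+1) < permEntry (n+1) (bp n k S α β) i)) ({k+1} : Finset ℕ) := by
    rw [Finset.disjoint_left]
    intro a ha hb
    simp only [Finset.mem_filter, Finset.mem_Icc] at ha
    simp only [Finset.mem_singleton] at hb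
    omega
  have hd2 : Disjoint (((Finset.Icc 1 (k-1)).filter (fun i =>
      permEntry (n+1) (bp n k S α β) (i-1) < permEntry (n+1) (bp n k S α β) i ∧
      permEntry (n+1) (bp n k S α β) (i+1) < permEntry (n+1) (bp n k S α β) i)) ∪ {k+1})
      ((Finset.Icc (k+3) (n+1)).filter (fun i =>
      permEntry (n+1) (bp n k S α β) (i-1) < permEntry (n+1) (bp n k S α β) i ∧
      permEntry (n+1) (bp n k S α β) (i+1) < permEntry (n+1) (bp n k S α β) i)) := by
    rw [Finset.disjoint_left]
    intro a ha hb
    simp only [Finset.mem_union, Finset.mem_filter, Finset.mem_Icc, Finset.mem_singleton] at ha hb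
    omega
  rw [Finset.card_union_of_disjoint hd2, Finset.card_union_of_disjoint hd1,
    bp_lpA S hS hk α β, bp_lpB S hS hk α β, Finset.card_singleton]
  omega

end PeakLemma

section Extract

variable {n k : ℕ}

def Sof (n k : ℕ) (σ : Equiv.Perm (Fin (n+1))) : Finset (Fin n) :=
  Finset.univ.filter (fun x => (σ.symm x.castSucc : ℕ) < k)

lemma mem_Sof {σ : Equiv.Perm (Fin (n+1))} {x : Fin n} :
    x ∈ Sof n k σ ↔ (σ.symm x.castSucc : ℕ) < k := by
  simp [Sof]

variable (hk : k ≤ n) (σ : Equiv.Perm (Fin (n+1)))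

lemma sigma_ne_last (hσ : σ ⟨k, by omega⟩ = Fin.last n) (j : Fin (n+1))
    (hj : (j : ℕ) ≠ k) : σ j ≠ Fin.last n := by
  intro h
  exact hj (congrArg Fin.val (σ.injective (h.trans hσ.symm)))

lemma Sof_card (hσ : σ ⟨k, by omega⟩ = Fin.last n) : (Sof n k σ).card = k := by
  conv_rhs => rw [← Finset.card_range k]
  refine Finset.card_bij' (i := fun x _ => ((σ.symm x.castSucc : Fin (n+1)) : ℕ))
    (j := fun a ha => (σ ⟨a, by have := Finset.mem_range.mp ha; omega⟩).castPred
      (sigma_ne_last hk σ hσ _ (by show a ≠ k; have := Finset.mem_range.mp ha; omega)))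
    ?hi ?hj ?left ?right
  case hi =>
    intro x hx
    exact Finset.mem_range.mpr (mem_Sof.mp hx)
  case hj =>
    intro a ha
    rw [mem_Sof, Fin.castSucc_castPred, Equiv.symm_apply_apply]
    exact Finset.mem_range.mp ha
  case left =>
    intro x hx
    have h1 : (⟨((σ.symm x.castSucc : Fin (n+1)) : ℕ), by omega⟩ : Fin (n+1)) = σ.symm x.castSucc :=
      Fin.ext rfl
    simp only [h1, Equiv.apply_symm_apply, Fin.castPred_castSucc]
  case right =>
    intro a ha
    simp only [Fin.castSucc_castPred, Equiv.symm_apply_apply]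

noncomputable def alphaOf (hσ : σ ⟨k, by omega⟩ = Fin.last n) : Equiv.Perm (Fin k) := by
  apply Equiv.ofBijective (f := fun j : Fin k =>
    ((Sof n k σ).orderIsoOfFin (Sof_card hk σ hσ)).symm
      ⟨(σ (j.castLE (by omega))).castPred
          (sigma_ne_last hk σ hσ _ (by rw [Fin.coe_castLE]; have := j.isLt; omega)),
        mem_Sof.mpr (by rw [Fin.castSucc_castPred, Equiv.symm_apply_apply, Fin.coe_castLE]
                        exact j.isLt)⟩)
  apply Finite.injective_iff_bijective.mp
  intro a b hab
  have h1 := congrArg (((Sof n k σ).orderIsoOfFin (Sof_card hk σ hσ))) hab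
  simp only [OrderIso.apply_symm_apply] at h1
  have h2 := congrArg Fin.castSucc (Subtype.ext_iff.mp h1)
  rw [Fin.castSucc_castPred, Fin.castSucc_castPred] at h2
  exact Fin.castLE_injective _ (σ.injective h2)

noncomputable def betaOf (hσ : σ ⟨k, by omega⟩ = Fin.last n) : Equiv.Perm (Fin (n - k)) := by
  apply Equiv.ofBijective (f := fun r : Fin (n - k) =>
    (((Sof n k σ)ᶜ).orderIsoOfFin (compl_card _ (Sof_card hk σ hσ))).symm
      ⟨(σ ⟨n - (r : ℕ), by have := r.isLt; omega⟩).castPred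
          (sigma_ne_last hk σ hσ _ (by show n - (r:ℕ) ≠ k; have := r.isLt; omega)),
        Finset.mem_compl.mpr (by
          rw [mem_Sof, Fin.castSucc_castPred, Equiv.symm_apply_apply]
          show ¬ (n - (r : ℕ) < k)
          have := r.isLt
          omega)⟩)
  apply Finite.injective_iff_bijective.mp
  intro a b hab
  have h1 := congrArg ((((Sof n k σ)ᶜ).orderIsoOfFin (compl_card _ (Sof_card hk σ hσ)))) hab
  simp only [OrderIso.apply_symm_apply] at h1
  have h2 := congrArg Fin.castSucc (Subtype.ext_iff.mp h1)
  rw [Fin.castSucc_castPred, Fin.castSucc_castPred] at h2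
  have h3 := σ.injective h2
  have h4 : n - (a : ℕ) = n - (b : ℕ) := by simpa using congrArg Fin.val h3
  have ha := a.isLt; have hb := b.isLt
  exact Fin.ext (by omega)

end Extract

section Inverse

variable {n k : ℕ} (hk : k ≤ n) (σ : Equiv.Perm (Fin (n+1)))

lemma bp_Sof (hσ : σ ⟨k, by omega⟩ = Fin.last n) :
    bp n k (Sof n k σ) (alphaOf hk σ hσ) (betaOf hk σ hσ) = σ := by
  apply Equiv.ext
  intro j
  rw [bp_apply _ (Sof_card hk σ hσ)]
  unfold bpFun
  by_cases h1 : (j : ℕ) < k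
  · rw [dif_pos h1]
    rw [← Finset.coe_orderIsoOfFin_apply]
    unfold alphaOf
    simp only [Equiv.ofBijective_apply, OrderIso.apply_symm_apply]
    rw [Fin.castSucc_castPred]
    exact congrArg σ (Fin.ext (by simp))
  · by_cases h2 : (j : ℕ) = k
    · rw [dif_neg h1, dif_pos h2]
      rw [← hσ]
      exact congrArg σ (Fin.ext h2.symm)
    · rw [dif_neg h1, dif_neg h2]
      rw [← Finset.coe_orderIsoOfFin_apply]
      unfold betaOf
      simp only [Equiv.ofBijective_apply, OrderIso.apply_symm_apply]
      rw [Fin.castSucc_castPred]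
      refine congrArg σ (Fin.ext ?_)
      show n - (n - (j : ℕ)) = (j : ℕ)
      have := j.isLt
      omega

end Inverse

section Counting

variable {n k : ℕ}

lemma bp_at_k (S : Finset (Fin n)) (hS : S.card = k) (hk : k ≤ n)
    (α : Equiv.Perm (Fin k)) (β : Equiv.Perm (Fin (n - k))) :
    bp n k S α β ⟨k, by omega⟩ = Fin.last n := by
  rw [bp_apply S hS, bpFun, dif_neg (show ¬ (k < k) by omega), dif_pos (show k = k from rfl)]

lemma Sof_bp (S : Finset (Fin n)) (hS : S.card = k) (hk : k ≤ n)
    (α : Equiv.Perm (Fin k)) (β : Equiv.Perm (Fin (n - k))) :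
    Sof n k (bp n k S α β) = S := by
  ext x
  rw [mem_Sof]
  have hx : bp n k S α β ((bp n k S α β).symm x.castSucc) = x.castSucc :=
    Equiv.apply_symm_apply _ _
  set j := (bp n k S α β).symm x.castSucc with hj
  rw [bp_apply S hS, bpFun] at hx
  by_cases h1 : (j : ℕ) < k
  · rw [dif_pos h1] at hx
    have hxx : (S.orderEmbOfFin hS (α ⟨(j : ℕ), h1⟩) : Fin n) = x := Fin.castSucc_injective _ hx
    simp only [h1, true_iff]
    rw [← hxx]
    exact Finset.orderEmbOfFin_mem _ _ _
  · by_cases h2 : (j : ℕ) = k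
    · rw [dif_neg h1, dif_pos h2] at hx
      exact absurd hx.symm (Fin.castSucc_lt_last _).ne
    · rw [dif_neg h1, dif_neg h2] at hx
      have hxx : (Sᶜ.orderEmbOfFin (compl_card S hS) (β ⟨n - (j : ℕ), by have := j.isLt; omega⟩) : Fin n) = x :=
        Fin.castSucc_injective _ hx
      simp only [h1, false_iff]
      intro hmem
      have : x ∈ Sᶜ := by rw [← hxx]; exact Finset.orderEmbOfFin_mem _ _ _
      exact Finset.mem_compl.mp this hmem

lemma bp_inj (S S' : Finset (Fin n)) (hS : S.card = k) (hS' : S'.card = k) (hk : k ≤ n)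
    (α α' : Equiv.Perm (Fin k)) (β β' : Equiv.Perm (Fin (n - k)))
    (h : bp n k S α β = bp n k S' α' β') : S = S' ∧ α = α' ∧ β = β' := by
  have hSS : S = S' := by
    rw [← Sof_bp S hS hk α β, h, Sof_bp S' hS' hk α' β']
  subst hSS
  refine ⟨rfl, ?_, ?_⟩
  · apply Equiv.ext
    intro x
    have hh := Equiv.ext_iff.mp h ⟨(x : ℕ), by have := x.isLt; omega⟩
    rw [bp_apply S hS, bp_apply S hS', bpFun, bpFun, dif_pos (show (x:ℕ) < k from x.isLt),
      dif_pos (show (x:ℕ) < k from x.isLt)] at hh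
    exact (S.orderEmbOfFin hS).injective (Fin.castSucc_injective _ hh)
  · apply Equiv.ext
    intro r
    have hr := r.isLt
    have hpe : permEntry (n+1) (bp n k S α β) (n - (r:ℕ) + 1)
        = permEntry (n+1) (bp n k S α' β') (n - (r:ℕ) + 1) := by rw [h]
    rw [bp_entry_suffix S hS hk α β (by omega) (by omega),
      bp_entry_suffix S hS' hk α' β' (by omega) (by omega)] at hpe
    have h5 : (Sᶜ.orderEmbOfFin (compl_card S hS) (β ⟨n + 1 - (n - (r:ℕ) + 1), by omega⟩) : Fin n)
        = Sᶜ.orderEmbOfFin (compl_card S hS') (β' ⟨n + 1 - (n - (r:ℕ) + 1), by omega⟩) :=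
      Fin.ext (by omega)
    have h6 := (Sᶜ.orderEmbOfFin (compl_card S hS)).injective h5
    have hix : (⟨n + 1 - (n - (r : ℕ) + 1), by omega⟩ : Fin (n - k)) = r :=
      Fin.ext (show n + 1 - (n - (r:ℕ) + 1) = r by omega)
    rwa [hix] at h6

lemma count_k (n k m : ℕ) (hk : k ≤ n) (hm : 1 ≤ m) :
    ((Finset.univ.filter (fun σ : Equiv.Perm (Fin (n+1)) => extPeakCount (n+1) σ = m)).filter
      (fun σ => ((σ.symm (Fin.last n) : Fin (n+1)) : ℕ) = k)).card
    = n.choose k * ∑ p ∈ Finset.HasAntidiagonal.antidiagonal (m-1),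
        leftPeakNum k p.1 * leftPeakNum (n-k) p.2 := by
  classical
  set D := ((Finset.powersetCard k (Finset.univ : Finset (Fin n)) ×ˢ
      (Finset.univ : Finset (Equiv.Perm (Fin k) × Equiv.Perm (Fin (n-k))))).filter
      (fun d => leftPeakCount k d.2.1 + leftPeakCount (n-k) d.2.2 = m - 1)) with hD
  have hmemD : ∀ d, d ∈ D ↔ d.1.card = k ∧
      leftPeakCount k d.2.1 + leftPeakCount (n-k) d.2.2 = m - 1 := by
    intro d
    simp [hD, Finset.mem_powersetCard]
  have hcard : D.card = ((Finset.univ.filter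
      (fun σ : Equiv.Perm (Fin (n+1)) => extPeakCount (n+1) σ = m)).filter
      (fun σ => ((σ.symm (Fin.last n) : Fin (n+1)) : ℕ) = k)).card := by
    apply Finset.card_bij (i := fun d _ => bp n k d.1 d.2.1 d.2.2)
    · intro d hd
      obtain ⟨hd1, hd2⟩ := (hmemD d).mp hd
      simp only [Finset.mem_filter, Finset.mem_univ, true_and]
      constructor
      · rw [bp_extPeak d.1 hd1 hk d.2.1 d.2.2]
        omega
      · rw [← bp_at_k d.1 hd1 hk d.2.1 d.2.2, Equiv.symm_apply_apply]
    · intro d1 hd1 d2 hd2 heq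
      obtain ⟨h11, _⟩ := (hmemD d1).mp hd1
      obtain ⟨h21, _⟩ := (hmemD d2).mp hd2
      obtain ⟨e1, e2, e3⟩ := bp_inj d1.1 d2.1 h11 h21 hk d1.2.1 d2.2.1 d1.2.2 d2.2.2 heq
      exact Prod.ext e1 (Prod.ext e2 e3)
    · intro σ hσ0
      simp only [Finset.mem_filter, Finset.mem_univ, true_and] at hσ0
      obtain ⟨hpk, hpos⟩ := hσ0
      have hσ : σ ⟨k, by omega⟩ = Fin.last n := by
        have h1 : σ.symm (Fin.last n) = ⟨k, by omega⟩ := Fin.ext hpos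
        rw [← h1, Equiv.apply_symm_apply]
      refine ⟨(Sof n k σ, (alphaOf hk σ hσ, betaOf hk σ hσ)), ?_, bp_Sof hk σ hσ⟩
      rw [hmemD]
      refine ⟨Sof_card hk σ hσ, ?_⟩
      have := bp_extPeak (Sof n k σ) (Sof_card hk σ hσ) hk (alphaOf hk σ hσ) (betaOf hk σ hσ)
      rw [bp_Sof hk σ hσ, hpk] at this
      show leftPeakCount k (alphaOf hk σ hσ) + leftPeakCount (n-k) (betaOf hk σ hσ) = m - 1
      omega
  rw [← hcard, hD]
  have hsplit : ((Finset.powersetCard k (Finset.univ : Finset (Fin n)) ×ˢ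
      (Finset.univ : Finset (Equiv.Perm (Fin k) × Equiv.Perm (Fin (n-k))))).filter
      (fun d => leftPeakCount k d.2.1 + leftPeakCount (n-k) d.2.2 = m - 1))
      = (Finset.powersetCard k (Finset.univ : Finset (Fin n)) : Finset (Finset (Fin n))) ×ˢ
        ((Finset.univ : Finset (Equiv.Perm (Fin k) × Equiv.Perm (Fin (n-k)))).filter
          (fun q => leftPeakCount k q.1 + leftPeakCount (n-k) q.2 = m - 1)) := by
    exact Finset.filter_product_right (fun q : Equiv.Perm (Fin k) × Equiv.Perm (Fin (n-k)) => leftPeakCount k q.1 + leftPeakCount (n-k) q.2 = m - 1)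
  rw [hsplit, Finset.card_product, Finset.card_powersetCard, Finset.card_univ,
    Fintype.card_fin]
  congr 1
  rw [Finset.card_eq_sum_card_fiberwise
    (f := fun q : Equiv.Perm (Fin k) × Equiv.Perm (Fin (n-k)) =>
      (leftPeakCount k q.1, leftPeakCount (n-k) q.2))
    (t := Finset.HasAntidiagonal.antidiagonal (m-1))
    (by intro x hx
        simp only [Finset.mem_coe, Finset.mem_filter] at hx
        exact Finset.HasAntidiagonal.mem_antidiagonal.mpr hx.2)]
  apply Finset.sum_congr rfl
  intro p hp
  have hps := Finset.HasAntidiagonal.mem_antidiagonal.mp hp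
  have hq : (Finset.univ.filter (fun q : Equiv.Perm (Fin k) × Equiv.Perm (Fin (n-k)) =>
        leftPeakCount k q.1 + leftPeakCount (n-k) q.2 = m - 1)).filter
        (fun q => (leftPeakCount k q.1, leftPeakCount (n-k) q.2) = p)
      = (Finset.univ.filter (fun a : Equiv.Perm (Fin k) => leftPeakCount k a = p.1)) ×ˢ
        (Finset.univ.filter (fun b : Equiv.Perm (Fin (n-k)) => leftPeakCount (n-k) b = p.2)) := by
    ext q
    simp only [Finset.mem_filter, Finset.mem_univ, true_and, Prod.ext_iff,
      Finset.mem_product]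
    constructor
    · rintro ⟨_, h2⟩; exact h2
    · rintro ⟨h1, h2⟩; exact ⟨by omega, h1, h2⟩
  rw [hq, Finset.card_product]
  rfl

lemma count_main (n m : ℕ) (hm : 1 ≤ m) :
    extPeakNum (n+1) m = ∑ k ∈ Finset.range (n+1),
      n.choose k * ∑ p ∈ Finset.HasAntidiagonal.antidiagonal (m-1),
        leftPeakNum k p.1 * leftPeakNum (n-k) p.2 := by
  rw [extPeakNum]
  rw [Finset.card_eq_sum_card_fiberwise
    (f := fun σ : Equiv.Perm (Fin (n+1)) => ((σ.symm (Fin.last n) : Fin (n+1)) : ℕ))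
    (t := Finset.range (n+1))
    (fun σ _ => Finset.mem_range.mpr (Fin.isLt _))]
  apply Finset.sum_congr rfl
  intro k hk
  exact count_k n k m (by have := Finset.mem_range.mp hk; omega) hm

end Counting

section Bound

lemma leftPeakCount_le (k : ℕ) (σ : Equiv.Perm (Fin k)) : 2 * leftPeakCount k σ ≤ k := by
  rw [leftPeakCount]
  have hcard : ((Finset.Icc 1 (k-1)).filter fun i =>
      permEntry k σ (i - 1) < permEntry k σ i ∧ permEntry k σ (i + 1) < permEntry k σ i).card
      ≤ (Finset.Icc 1 (k/2)).card := by
    apply Finset.card_le_card_of_injOn (fun i => (i + 1) / 2)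
    · intro i hi
      simp only [Finset.mem_coe, Finset.mem_filter, Finset.mem_Icc] at hi ⊢
      omega
    · intro i hi j hj hij
      simp only [Finset.coe_filter, Set.mem_setOf_eq, Finset.mem_Icc] at hi hj
      by_contra hne
      have hij' : (i + 1) / 2 = (j + 1) / 2 := hij
      have hadj : j = i + 1 ∨ i = j + 1 := by omega
      rcases hadj with h | h
      · obtain ⟨_, _, hp2⟩ := hi
        obtain ⟨_, hq1, _⟩ := hj
        rw [h] at hq1
        simp only [Nat.add_sub_cancel] at hq1
        omega
      · obtain ⟨_, hp1, _⟩ := hi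
        obtain ⟨_, _, hq2⟩ := hj
        rw [h] at hp1
        simp only [Nat.add_sub_cancel] at hp1
        omega
    
  have := Nat.card_Icc 1 (k/2)
  omega

lemma Lzero (k a : ℕ) (h : k < 2 * a) : leftPeakNum k a = 0 := by
  rw [leftPeakNum, Finset.card_eq_zero, Finset.filter_eq_empty_iff]
  intro σ _
  have := leftPeakCount_le k σ
  omega

end Bound

section Poly

noncomputable def Fk (n k : ℕ) (p : ℕ × ℕ) : MvPolynomial (Fin 2) ℚ :=
  (n.choose k : MvPolynomial (Fin 2) ℚ) * (leftPeakNum k p.1 : MvPolynomial (Fin 2) ℚ) *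
    (leftPeakNum (n - k) p.2 : MvPolynomial (Fin 2) ℚ) *
    X 0 ^ (2 * (p.1 + p.2 + 1)) * X 1 ^ (n + 1 + 1 - 2 * (p.1 + p.2 + 1))

lemma Fk_pair (n k a b : ℕ) : Fk n k (a, b)
    = (n.choose k : MvPolynomial (Fin 2) ℚ) * (leftPeakNum k a : MvPolynomial (Fin 2) ℚ) *
      (leftPeakNum (n - k) b : MvPolynomial (Fin 2) ℚ) *
      X 0 ^ (2 * (a + b + 1)) * X 1 ^ (n + 1 + 1 - 2 * (a + b + 1)) := rfl

lemma Fk_zero (n k : ℕ) (hk : k ≤ n) (p : ℕ × ℕ) (hp : n + 1 ≤ 2 * (p.1 + p.2)) :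
    Fk n k p = 0 := by
  by_cases h1 : 2 * p.1 ≤ k
  · rw [Fk, Lzero (n - k) p.2 (by omega)]
    push_cast
    ring
  · rw [Fk, Lzero k p.1 (by omega)]
    push_cast
    ring

lemma reindex_sum {G : Type*} [AddCommMonoid G] (N M : ℕ) (hMN : M ≤ N) (g : ℕ × ℕ → G)
    (hg : ∀ p : ℕ × ℕ, M ≤ p.1 + p.2 → g p = 0) :
    ∑ m ∈ Finset.Icc 1 M, ∑ p ∈ Finset.HasAntidiagonal.antidiagonal (m - 1), g p
      = ∑ p ∈ Finset.range N ×ˢ Finset.range N, g p := by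
  have h1 : ∑ m ∈ Finset.Icc 1 M, ∑ p ∈ Finset.HasAntidiagonal.antidiagonal (m - 1), g p
      = ∑ j ∈ Finset.range M, ∑ p ∈ Finset.HasAntidiagonal.antidiagonal j, g p := by
    rw [← Finset.Ico_add_one_right_eq_Icc, Finset.sum_Ico_eq_sum_range]
    simp only [Nat.succ_sub_one, Nat.add_sub_cancel, Nat.add_sub_cancel_left]
  rw [h1, Finset.sum_sigma']
  have h2 : ∑ x ∈ (Finset.range M).sigma (fun j => Finset.HasAntidiagonal.antidiagonal j), g x.2
      = ∑ p ∈ (Finset.range N ×ˢ Finset.range N).filter (fun p => p.1 + p.2 < M), g p := by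
    apply Finset.sum_nbij' (i := fun x => x.2) (j := fun p => ⟨p.1 + p.2, p⟩)
    · intro x hx
      simp only [Finset.mem_sigma, Finset.mem_range, Finset.HasAntidiagonal.mem_antidiagonal] at hx
      simp only [Finset.mem_filter, Finset.mem_product, Finset.mem_range]
      omega
    · intro p hp
      simp only [Finset.mem_filter, Finset.mem_product, Finset.mem_range] at hp
      exact Finset.mem_sigma.mpr ⟨Finset.mem_range.mpr (by show p.1 + p.2 < M; omega), Finset.HasAntidiagonal.mem_antidiagonal.mpr rfl⟩
    · intro x hx
      simp only [Finset.mem_sigma, Finset.mem_range, Finset.HasAntidiagonal.mem_antidiagonal] at hx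
      exact Sigma.ext hx.2 HEq.rfl
    · intro p hp
      rfl
    · intro x hx
      rfl
  rw [h2]
  apply Finset.sum_subset (Finset.filter_subset _ _)
  intro p hp hnp
  simp only [Finset.mem_filter, Finset.mem_product, Finset.mem_range] at hp hnp
  exact hg p (by omega)

lemma Fk_sum (n k : ℕ) (hk : k ≤ n) :
    ∑ p ∈ Finset.range (n+1) ×ˢ Finset.range (n+1), Fk n k p
      = (n.choose k : MvPolynomial (Fin 2) ℚ) * Lb k * Lb (n - k) := by
  have hLb : ∀ (j : ℕ), j ≤ n → Lb j = ∑ a ∈ Finset.range (n+1),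
      (leftPeakNum j a : MvPolynomial (Fin 2) ℚ) * X 0 ^ (2*a+1) * X 1 ^ (j - 2*a) := by
    intro j hj
    rw [Lb]
    apply Finset.sum_subset
    · intro a ha
      simp only [Finset.mem_range] at *
      omega
    · intro a ha hna
      simp only [Finset.mem_range] at ha hna
      rw [Lzero j a (by omega)]
      push_cast
      ring
  rw [hLb k hk, hLb (n-k) (by omega), mul_assoc, Finset.sum_mul_sum]
  simp only [Finset.mul_sum]
  rw [Finset.sum_product]
  apply Finset.sum_congr rfl
  intro a ha
  apply Finset.sum_congr rfl
  intro b hb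
  simp only [Finset.mem_range] at ha hb
  rw [Fk_pair]
  by_cases hab : 2 * a ≤ k ∧ 2 * b ≤ n - k
  · rw [show 2 * (a + b + 1) = (2*a+1) + (2*b+1) by omega]
    rw [show n + 1 + 1 - (2*a+1 + (2*b+1)) = (k - 2*a) + ((n - k) - 2*b) by omega,
      pow_add, pow_add]
    ring
  · by_cases h1 : 2 * a ≤ k
    · rw [Lzero (n - k) b (by omega)]
      push_cast
      ring
    · rw [Lzero k a (by omega)]
      push_cast
      ring

end Poly

/-- `W_{n+1}(x,y) = Σ_{k=0}^{n} C(n,k)·L_k(x,y)·L_{n−k}(x,y)` for `n ≥ 1`. -/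
theorem stmt_6 (n : ℕ) (hn : 1 ≤ n) :
    Wb (n + 1) = ∑ k ∈ Finset.range (n + 1),
      (n.choose k : MvPolynomial (Fin 2) ℚ) * Lb k * Lb (n - k) := by
  rw [Wb, if_neg (by omega : ¬ (n + 1 = 0))]
  have hstep1 : ∀ m ∈ Finset.Icc 1 ((n + 1 + 1) / 2),
      (extPeakNum (n+1) m : MvPolynomial (Fin 2) ℚ) * X 0 ^ (2 * m) * X 1 ^ (n + 1 + 1 - 2 * m)
      = ∑ k ∈ Finset.range (n+1), ∑ p ∈ Finset.HasAntidiagonal.antidiagonal (m - 1), Fk n k p := by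
    intro m hm
    obtain ⟨hm1, hm2⟩ := Finset.mem_Icc.mp hm
    rw [count_main n m hm1]
    rw [Nat.cast_sum]
    rw [Finset.sum_mul, Finset.sum_mul]
    apply Finset.sum_congr rfl
    intro k hk
    rw [Nat.cast_mul, Nat.cast_sum]
    rw [Finset.mul_sum, Finset.sum_mul, Finset.sum_mul]
    apply Finset.sum_congr rfl
    intro p hp
    have hpa := Finset.HasAntidiagonal.mem_antidiagonal.mp hp
    have hmp : m = p.1 + p.2 + 1 := by omega
    subst hmp
    rw [Fk, Nat.cast_mul]
    ring
  rw [Finset.sum_congr rfl hstep1, Finset.sum_comm]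
  apply Finset.sum_congr rfl
  intro k hk
  have hkn : k ≤ n := by
    have := Finset.mem_range.mp hk
    omega
  rw [reindex_sum (n+1) ((n + 1 + 1) / 2) (by omega) (Fk n k)
    (fun p hp => Fk_zero n k hkn p (by omega))]
  exact Fk_sum n k hkn
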